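/- arXiv:1709.04443 — 3 statements merged into one kernel-verified Lean document; each statement's English description precedes it below -/
import Mathlib

section
/- Let n = 2^e + d with 0 ≤ d < 2^e and let k ≥ 2. Define h_k(n) = zcl_k(n) − (k−1)·n, with h_k(0) = 0. Then h_k(n) = min(h_k(d) + 2^e, (k−1)(2^{e+1} − 1 − n)). -/
/-- `x` and `y` have disjoint binary digits. -/
def Dis (x y : ℕ) : Prop := ∀ i, x / 2^i % 2 = 0 ∨ y / 2^i % 2 = 0

lemma dis_comm {x y : ℕ} (h : Dis x y) : Dis y x := fun i => (h i).symm

lemma dis_zero (y : ℕ) : Dis 0 y := fun i => Or.inl (by simp)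

lemma bit_div2 (x i : ℕ) : (x / 2) / 2^i = x / 2^(i+1) := by
  rw [Nat.div_div_eq_div_mul, pow_succ, mul_comm]

lemma dis_iff (x y : ℕ) :
    Dis x y ↔ (x % 2 = 0 ∨ y % 2 = 0) ∧ Dis (x/2) (y/2) := by
  constructor
  · intro h
    refine ⟨by simpa using h 0, fun i => ?_⟩
    rw [bit_div2, bit_div2]; exact h (i+1)
  · rintro ⟨h0, h⟩ i
    cases i with
    | zero => simpa using h0
    | succ i => rw [← bit_div2, ← bit_div2]; exact h i

lemma dis_add_lt {q : ℕ} : ∀ {x y : ℕ}, Dis x y → x < 2^q → y < 2^q → x + y < 2^q := by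
  induction q with
  | zero => intro x y _ hx hy; omega
  | succ q ih =>
    intro x y h hx hy
    rw [dis_iff] at h
    have := ih h.2 (by omega : x / 2 < 2^q) (by omega : y / 2 < 2^q)
    have h0 := h.1
    omega

lemma dis_comp {q : ℕ} : ∀ {s : ℕ}, s < 2^q → Dis (2^q - 1 - s) s := by
  induction q with
  | zero => intro s hs; interval_cases s; exact dis_zero 0
  | succ q ih =>
    intro s hs
    rw [dis_iff]
    have h1 : (2^(q+1) - 1 - s) / 2 = 2^q - 1 - s/2 := by omega
    have h2 : (2^(q+1) - 1 - s) % 2 = 1 - s % 2 := by omega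
    refine ⟨by omega, ?_⟩
    rw [h1]
    exact ih (by omega)

lemma odd_choose_add : ∀ s x y : ℕ, x + y = s → (Odd ((x+y).choose x) ↔ Dis x y) := by
  intro s
  induction s using Nat.strong_induction_on with
  | _ s ih =>
    intro x y hs
    rcases Nat.eq_zero_or_pos s with h0 | hpos
    · have hx : x = 0 := by omega
      have hy : y = 0 := by omega
      subst hx; subst hy
      simp [dis_zero]
    have hmod := @Choose.choose_modEq_choose_mod_mul_choose_div_nat (x+y) x 2 ⟨Nat.prime_two⟩
    have hodd : Odd ((x+y).choose x) ↔
        Odd (((x+y) % 2).choose (x % 2) * ((x+y) / 2).choose (x / 2)) := by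
      unfold Nat.ModEq at hmod
      constructor <;> intro hh <;> rw [Nat.odd_iff] at hh ⊢ <;> omega
    rw [hodd, Nat.odd_mul]
    by_cases hc : x % 2 = 1 ∧ y % 2 = 1
    · have h1 : (x+y) % 2 = 0 := by omega
      have h2 : x % 2 = 1 := hc.1
      rw [h1, h2]
      simp only [Nat.choose]
      constructor
      · rintro ⟨h, -⟩; simp [Nat.odd_iff] at h
      · intro h; exact absurd (h 0) (by simpa using hc)
    · -- no carry at bit 0
      have hdiv : (x+y)/2 = x/2 + y/2 := by omega
      have hmm : ((x+y) % 2).choose (x % 2) = 1 := by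
        have h1 : x % 2 ≤ (x+y) % 2 := by omega
        have h2 : (x+y) % 2 < 2 := Nat.mod_lt _ (by norm_num)
        interval_cases hh : (x+y) % 2 <;> [skip; skip] <;>
          (interval_cases hx : x % 2 <;> simp)
      have ihh := ih (x/2 + y/2) (by omega) (x/2) (y/2) rfl
      rw [hmm, hdiv, ihh]
      rw [dis_iff (x := x) (y := y)]
      constructor
      · intro hh; exact ⟨by omega, hh.2⟩
      · intro hh; exact ⟨by simp, hh.2⟩

lemma odd_choose_iff (a b : ℕ) : Odd (a.choose b) ↔ b ≤ a ∧ Dis b (a - b) := by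
  rcases le_or_gt b a with hle | hlt
  · obtain ⟨y, hy⟩ : ∃ y, a = b + y := ⟨a - b, by omega⟩
    subst hy
    rw [odd_choose_add _ b y rfl]
    have : b + y - b = y := by omega
    rw [this]
    simp [hle]
  · rw [Nat.choose_eq_zero_of_lt hlt]
    simp only [Nat.odd_iff, Nat.zero_mod]
    omega

lemma H1 {i Q : ℕ} (x c : ℕ) (hi : i < Q) : (2^Q * x + c) / 2^i % 2 = c / 2^i % 2 := by
  have h2 : 2^Q * x = 2^i * (2^(Q-i) * x) := by
    rw [← mul_assoc, ← pow_add]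
    congr 2
    omega
  rw [h2, Nat.mul_add_div (by positivity)]
  have h3 : 2^(Q-i) * x = 2 * (2^(Q-i-1) * x) := by
    rw [← mul_assoc, ← pow_succ']
    congr 2
    omega
  rw [h3, Nat.add_comm, Nat.add_mul_mod_self_left]

lemma H3 {i Q : ℕ} (x c : ℕ) (hc : c < 2^Q) (hi : Q ≤ i) :
    (2^Q * x + c) / 2^i = x / 2^(i-Q) := by
  have h1 : (2^Q * x + c) / 2^Q = x := by
    rw [Nat.mul_add_div (by positivity), Nat.div_eq_of_lt hc, add_zero]
  have h2 : (2:ℕ)^i = 2^Q * 2^(i-Q) := by rw [← pow_add]; congr 1; omega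
  rw [h2, ← Nat.div_div_eq_div_mul, h1]

lemma H4 (x Q : ℕ) : x % 2^(Q+1) = 2^Q * (x / 2^Q % 2) + x % 2^Q := by
  conv_lhs => rw [pow_succ, Nat.mod_mul]
  ring

lemma H5 {i Q : ℕ} (x : ℕ) (hi : i < Q) : x % 2 ^ Q / 2 ^ i % 2 = x / 2 ^ i % 2 := by
  conv_rhs => rw [← Nat.div_add_mod x (2 ^ Q)]
  rw [mul_comm (2 ^ Q) (x / 2 ^ Q), mul_comm (x / 2 ^ Q) (2 ^ Q), H1 _ _ hi]

lemma key (j m n : ℕ) (hjm : Dis j m) (hjn : j ≤ n) :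
    ∃ mt, mt ≤ m ∧ Dis mt n ∧ j + m ≤ n + mt := by
  by_cases hmn : Dis m n
  · exact ⟨m, le_rfl, hmn, by omega⟩
  · -- find the highest common bit q of m and n
    have hex : ∃ i, m / 2 ^ i % 2 = 1 ∧ n / 2 ^ i % 2 = 1 := by
      simp only [Dis, not_forall] at hmn
      obtain ⟨i, hi⟩ := hmn
      exact ⟨i, by omega, by omega⟩
    have hbound : ∀ i, (m / 2 ^ i % 2 = 1 ∧ n / 2 ^ i % 2 = 1) → i ≤ m := by
      intro i hi
      have h2 : 2 ^ i ≤ m := by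
        rcases Nat.lt_or_ge m (2 ^ i) with h | h
        · rw [Nat.div_eq_of_lt h] at hi; omega
        · exact h
      have := i.lt_two_pow_self
      omega
    obtain ⟨i₀, hi₀⟩ := hex
    set q := Nat.findGreatest (fun i => m / 2 ^ i % 2 = 1 ∧ n / 2 ^ i % 2 = 1) m with hq
    have hPq : m / 2 ^ q % 2 = 1 ∧ n / 2 ^ q % 2 = 1 := by
      have := Nat.findGreatest_spec (P := fun i => m / 2 ^ i % 2 = 1 ∧ n / 2 ^ i % 2 = 1)
        (hbound i₀ hi₀) hi₀
      simpa using this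
    have hqmax : ∀ i, q < i → ¬ (m / 2 ^ i % 2 = 1 ∧ n / 2 ^ i % 2 = 1) := by
      intro i hi
      rcases le_or_gt i m with hh | hh
      · have := Nat.findGreatest_is_greatest
          (P := fun i => m / 2 ^ i % 2 = 1 ∧ n / 2 ^ i % 2 = 1) hi hh
        simpa using this
      · intro hPi; exact absurd (hbound i hPi) (by omega)
    -- decompositions
    have hm : m = 2 ^ (q+1) * (m / 2 ^ (q+1)) + (2 ^ q + m % 2 ^ q) := by
      have h1 := Nat.div_add_mod m (2 ^ (q+1))
      have h4 := H4 m q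
      rw [hPq.1, mul_one] at h4
      omega
    have hn : n = 2 ^ (q+1) * (n / 2 ^ (q+1)) + (2 ^ q + n % 2 ^ q) := by
      have h1 := Nat.div_add_mod n (2 ^ (q+1))
      have h4 := H4 n q
      rw [hPq.2, mul_one] at h4
      omega
    have hjbit : j / 2 ^ q % 2 = 0 := by
      rcases hjm q with hh | hh
      · exact hh
      · rw [hPq.1] at hh; exact absurd hh one_ne_zero
    have hj : j = 2 ^ (q+1) * (j / 2 ^ (q+1)) + j % 2 ^ q := by
      have h1 := Nat.div_add_mod j (2 ^ (q+1))
      have h4 := H4 j q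
      rw [hjbit, mul_zero] at h4
      omega
    have hBC : 2 ^ (q+1) * (j / 2 ^ (q+1)) ≤ 2 ^ (q+1) * (n / 2 ^ (q+1)) :=
      Nat.mul_le_mul_left _ (Nat.div_le_div_right hjn)
    have htr : j % 2 ^ q + m % 2 ^ q < 2 ^ q := by
      refine dis_add_lt ?_ (Nat.mod_lt _ (by positivity)) (Nat.mod_lt _ (by positivity))
      intro i
      rcases Nat.lt_or_ge i q with hh | hh
      · rw [H5 _ hh, H5 _ hh]; exact hjm i
      · left
        rw [Nat.div_eq_of_lt (lt_of_lt_of_le (Nat.mod_lt _ (by positivity))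
          (Nat.pow_le_pow_right (by norm_num) hh))]
    refine ⟨2 ^ (q+1) * (m / 2 ^ (q+1)) + (2 ^ q - 1 - n % 2 ^ q), ?_, ?_, ?_⟩
    · have hr : m % 2 ^ q < 2 ^ q := Nat.mod_lt _ (by positivity)
      omega
    · -- Dis mt n
      intro i
      rcases Nat.lt_or_ge i (q+1) with hi | hi
      · rw [H1 _ _ hi]
        rcases Nat.lt_or_ge i q with hiq | hiq
        · rcases dis_comp (s := n % 2 ^ q) (Nat.mod_lt _ (by positivity)) i with hh | hh
          · exact Or.inl hh
          · right; rw [← H5 _ hiq]; exact hh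
        · have : i = q := by omega
          subst this
          left
          rw [Nat.div_eq_of_lt (by omega)]
      · -- high bits
        have hmt : (2 ^ (q+1) * (m / 2 ^ (q+1)) + (2 ^ q - 1 - n % 2 ^ q)) / 2 ^ i
            = (m / 2 ^ (q+1)) / 2 ^ (i - (q+1)) := H3 _ _ (by omega) hi
        have hmhigh : m / 2 ^ i = (m / 2 ^ (q+1)) / 2 ^ (i - (q+1)) := by
          conv_lhs => rw [hm]
          exact H3 _ _ (by have := Nat.mod_lt m (y := 2 ^ q) (by positivity); omega) hi
        rw [hmt, ← hmhigh]
        by_contra hcon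
        push_neg at hcon
        have h1 : m / 2 ^ i % 2 = 1 := by omega
        have h2 : n / 2 ^ i % 2 = 1 := by omega
        rcases Nat.lt_or_ge q i with hh | hh
        · exact hqmax i hh ⟨h1, h2⟩
        · have : i = q := by omega
          subst this
          have h5 := Nat.div_add_mod m (2 ^ q)
          omega
    · -- the inequality
      have hr : m % 2 ^ q < 2 ^ q := Nat.mod_lt _ (by positivity)
      have hs : n % 2 ^ q < 2 ^ q := Nat.mod_lt _ (by positivity)
      omega

lemma expand (e m : ℕ) : m % 2 ^ e = ∑ b ∈ Finset.range e, (m / 2 ^ b % 2) * 2 ^ b := by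
  induction e with
  | zero => simp [Nat.mod_one]
  | succ e ih => rw [Finset.sum_range_succ, ← ih, H4 m e]; ring

lemma sum_range_two_pow (e : ℕ) : ∑ b ∈ Finset.range e, 2 ^ b = 2 ^ e - 1 := by
  induction e with
  | zero => simp
  | succ e ih =>
    rw [Finset.sum_range_succ, ih]
    have h0 : 0 < 2 ^ e := by positivity
    omega

lemma sumbit (e : ℕ) (ε : ℕ → ℕ) (hε : ∀ b, ε b ≤ 1) :
    (∑ b ∈ Finset.range e, ε b * 2 ^ b) < 2 ^ e ∧
      ∀ i, (∑ b ∈ Finset.range e, ε b * 2 ^ b) / 2 ^ i % 2 = if i < e then ε i else 0 := by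
  induction e with
  | zero => simp
  | succ e ih =>
    have h0 : 0 < 2 ^ e := by positivity
    rw [Finset.sum_range_succ]
    have hb : ε e = 0 ∨ ε e = 1 := by have := hε e; omega
    rcases hb with hb | hb
    · rw [hb, zero_mul, add_zero]
      refine ⟨by have := ih.1; omega, fun i => ?_⟩
      rw [ih.2 i]
      rcases Nat.lt_or_ge i e with hh | hh
      · rw [if_pos hh, if_pos (by omega)]
      · rcases Nat.eq_or_lt_of_le hh with hh2 | hh2
        · rw [if_neg (by omega), if_pos (by omega), ← hh2, hb]
        · rw [if_neg (by omega), if_neg (by omega)]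
    · rw [hb, one_mul]
      have h1 := ih.1
      refine ⟨by omega, fun i => ?_⟩
      rw [add_comm, show (2:ℕ)^e = 2^e * 1 from (mul_one _).symm]
      rcases Nat.lt_or_ge i e with hh | hh
      · rw [H1 _ _ hh, ih.2 i, if_pos hh, if_pos (by omega)]
      · rw [H3 _ _ h1 hh]
        rcases Nat.eq_or_lt_of_le hh with hh2 | hh2
        · rw [← hh2, Nat.sub_self, pow_zero, Nat.div_one, if_pos (by omega), hb]
        · rw [Nat.div_eq_of_lt
            (by have : 2^1 ≤ 2^(i-e) := Nat.pow_le_pow_right (by norm_num) (by omega); omega),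
            if_neg (by omega)]

lemma sum_ite_lt (K t : ℕ) : (∑ i ∈ Finset.range K, if i < t then 1 else 0) = min t K := by
  induction K with
  | zero => simp
  | succ K ih =>
    rw [Finset.sum_range_succ, ih]
    by_cases h : K < t
    · rw [if_pos h]; omega
    · rw [if_neg h]; omega

lemma coin : ∀ e (c : ℕ → ℕ) (t : ℕ), 2 ^ e ∣ t → t ≤ ∑ b ∈ Finset.range e, c b * 2 ^ b →
    ∃ a : ℕ → ℕ, (∀ b, a b ≤ c b) ∧ ∑ b ∈ Finset.range e, a b * 2 ^ b = t := by
  intro e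
  induction e with
  | zero =>
    intro c t _ ht
    simp at ht
    exact ⟨fun _ => 0, fun b => Nat.zero_le _, by simp [ht]⟩
  | succ e ih =>
    intro c t hdvd ht
    obtain ⟨k, hk⟩ := hdvd
    rcases Nat.lt_or_ge (c e) (2 * k) with hc | hc
    · -- c e exhausted
      have ht' : t - c e * 2 ^ e ≤ ∑ b ∈ Finset.range e, c b * 2 ^ b := by
        rw [Finset.sum_range_succ] at ht; omega
      have hdvd' : 2 ^ e ∣ t - c e * 2 ^ e := by
        have h1 : (2:ℕ)^e ∣ t := ⟨2 * k, by rw [hk]; ring⟩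
        exact Nat.dvd_sub h1 ⟨c e, by ring⟩
      obtain ⟨a', ha', hsum'⟩ := ih c _ hdvd' ht'
      refine ⟨fun b => if b = e then c e else a' b, fun b => ?_, ?_⟩
      · by_cases hb : b = e <;> simp [hb, ha' b]
      · rw [Finset.sum_range_succ]
        have hcong : (∑ x ∈ Finset.range e, (if x = e then c e else a' x) * 2 ^ x)
            = ∑ x ∈ Finset.range e, a' x * 2 ^ x := by
          refine Finset.sum_congr rfl fun b hb => ?_
          simp only [Finset.mem_range] at hb
          rw [if_neg (by omega)]
        have hite : (if e = e then c e else a' e) = c e := if_pos rfl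
        rw [hcong]
        beta_reduce
        rw [hite, hsum']
        have hle : c e * 2 ^ e ≤ t := by
          calc c e * 2 ^ e ≤ 2 * k * 2 ^ e := Nat.mul_le_mul_right _ (by omega)
          _ = t := by rw [hk]; ring
        omega
    · -- enough at top bit
      refine ⟨fun b => if b = e then 2 * k else 0, fun b => ?_, ?_⟩
      · by_cases hb : b = e
        · simp [hb]; omega
        · simp [hb]
      · rw [Finset.sum_range_succ]
        have hcong : (∑ x ∈ Finset.range e, (if x = e then 2 * k else 0) * 2 ^ x) = 0 := by
          refine Finset.sum_eq_zero fun b hb => ?_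
          simp only [Finset.mem_range] at hb
          rw [if_neg (by omega), zero_mul]
        have hite : (if e = e then 2 * k else 0) = 2 * k := if_pos rfl
        rw [hcong]
        beta_reduce
        rw [hite, hk]
        ring

def DDSet (K n : ℕ) : Set ℕ :=
  {s | ∃ m : Fin K → ℕ, s = ∑ i, m i ∧ (∀ i, Dis (m i) n) ∧ ∑ i, m i ≤ n}

noncomputable def DD (K n : ℕ) : ℕ := sSup (DDSet K n)

lemma DDSet_zero_mem (K n : ℕ) : 0 ∈ DDSet K n :=
  ⟨fun _ => 0, by simp, fun _ => dis_zero n, by simp⟩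

lemma DDSet_le (K n : ℕ) {s : ℕ} (hs : s ∈ DDSet K n) : s ≤ n := by
  obtain ⟨m, rfl, -, hle⟩ := hs; exact hle

lemma DD_le (K n : ℕ) : DD K n ≤ n :=
  csSup_le ⟨0, DDSet_zero_mem K n⟩ (fun s hs => DDSet_le K n hs)

lemma DD_mem (K n : ℕ) : DD K n ∈ DDSet K n :=
  Nat.sSup_mem ⟨0, DDSet_zero_mem K n⟩ ⟨n, fun s hs => DDSet_le K n hs⟩

lemma le_DD (K n : ℕ) {s : ℕ} (hs : s ∈ DDSet K n) : s ≤ DD K n :=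
  le_csSup ⟨n, fun s hs => DDSet_le K n hs⟩ hs

/-- masks to digits -/
lemma masks_to_digits (K e : ℕ) (m : Fin K → ℕ) (hm : ∀ i, m i < 2 ^ e) :
    ∑ i, m i = ∑ b ∈ Finset.range e, (∑ i, m i / 2 ^ b % 2) * 2 ^ b := by
  have h1 : ∀ i : Fin K, m i = ∑ b ∈ Finset.range e, (m i / 2 ^ b % 2) * 2 ^ b := by
    intro i
    rw [← expand e (m i), Nat.mod_eq_of_lt (hm i)]
  calc ∑ i, m i = ∑ i : Fin K, ∑ b ∈ Finset.range e, (m i / 2 ^ b % 2) * 2 ^ b :=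
        Finset.sum_congr rfl (fun i _ => h1 i)
    _ = ∑ b ∈ Finset.range e, ∑ i : Fin K, (m i / 2 ^ b % 2) * 2 ^ b := Finset.sum_comm
    _ = ∑ b ∈ Finset.range e, (∑ i, m i / 2 ^ b % 2) * 2 ^ b := by
        refine Finset.sum_congr rfl fun b _ => ?_
        rw [Finset.sum_mul]

/-- digits to masks -/
lemma digits_to_masks (K e n : ℕ) (c : ℕ → ℕ) (hcK : ∀ b, c b ≤ K)
    (hfree : ∀ b, b < e → c b ≠ 0 → n / 2 ^ b % 2 = 0)
    (hle : ∑ b ∈ Finset.range e, c b * 2 ^ b ≤ n) :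
    (∑ b ∈ Finset.range e, c b * 2 ^ b) ∈ DDSet K n := by
  set m : Fin K → ℕ := fun i => ∑ b ∈ Finset.range e, (if (i : ℕ) < c b then 1 else 0) * 2 ^ b
    with hmdef
  have hbits := fun i : Fin K =>
    sumbit e (fun b => if (i : ℕ) < c b then 1 else 0) (fun b => by split <;> omega)
  have hsum : ∑ i, m i = ∑ b ∈ Finset.range e, c b * 2 ^ b := by
    rw [hmdef]
    rw [Finset.sum_comm]
    refine Finset.sum_congr rfl fun b _ => ?_
    rw [← Finset.sum_mul]
    congr 1
    rw [Fin.sum_univ_eq_sum_range (fun i => if i < c b then 1 else 0), sum_ite_lt]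
    have := hcK b
    omega
  refine ⟨m, hsum.symm, fun i => ?_, by rw [hsum]; exact hle⟩
  intro b
  rcases Nat.lt_or_ge b e with hb | hb
  · rcases Nat.eq_zero_or_pos (c b) with h0 | h0
    · left
      rw [(hbits i).2 b, if_pos hb, h0]
      simp
    · right
      exact hfree b hb (by omega)
  · left
    rw [(hbits i).2 b, if_neg (by omega)]

lemma nbit_lt {e b : ℕ} (d : ℕ) (hb : b < e) : (2 ^ e + d) / 2 ^ b % 2 = d / 2 ^ b % 2 := by
  have := H1 (Q := e) 1 d hb
  rwa [mul_one] at this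

lemma nbit_e {e : ℕ} (d : ℕ) (hd : d < 2 ^ e) : (2 ^ e + d) / 2 ^ e % 2 = 1 := by
  have := H3 (Q := e) (i := e) 1 d hd le_rfl
  rw [mul_one] at this
  rw [this]
  simp

lemma xbit_high {x e b : ℕ} (hx : x < 2 ^ e) (hb : e ≤ b) : x / 2 ^ b % 2 = 0 := by
  rw [Nat.div_eq_of_lt (lt_of_lt_of_le hx (Nat.pow_le_pow_right (by norm_num) hb))]

lemma lt_pow_of_bit_zero {x e : ℕ} (h1 : x < 2 ^ (e+1)) (h2 : x / 2 ^ e % 2 = 0) :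
    x < 2 ^ e := by
  have hdm := Nat.div_add_mod x (2 ^ e)
  have hm : x % 2 ^ e < 2 ^ e := Nat.mod_lt _ (by positivity)
  have hlt : x / 2 ^ e < 2 := by
    rw [Nat.div_lt_iff_lt_mul (by positivity : (0:ℕ) < 2 ^ e)]
    have h3 : (2:ℕ) ^ (e+1) = 2 * 2 ^ e := by ring
    omega
  have h0 : x / 2 ^ e = 0 := by
    generalize x / 2 ^ e = t at hlt h2
    omega
  rw [h0, mul_zero] at hdm
  omega

lemma dis_d_of_dis_n {e d x : ℕ} (hx : x < 2 ^ e) (h : Dis x (2 ^ e + d)) : Dis x d := by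
  intro b
  rcases Nat.lt_or_ge b e with hb | hb
  · rcases h b with hh | hh
    · exact Or.inl hh
    · right; rwa [nbit_lt d hb] at hh
  · exact Or.inl (xbit_high hx hb)

lemma dis_n_of_dis_d {e d x : ℕ} (hx : x < 2 ^ e) (h : Dis x d) : Dis x (2 ^ e + d) := by
  intro b
  rcases Nat.lt_or_ge b e with hb | hb
  · rcases h b with hh | hh
    · exact Or.inl hh
    · right; rwa [nbit_lt d hb]
  · exact Or.inl (xbit_high hx hb)

lemma bit_sum_le (K : ℕ) (m : Fin K → ℕ) (b : ℕ) : (∑ i, m i / 2 ^ b % 2) ≤ K := by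
  calc (∑ i, m i / 2 ^ b % 2) ≤ (Finset.univ : Finset (Fin K)).card • 1 :=
        Finset.sum_le_card_nsmul _ _ 1 (fun i _ => by omega)
  _ = K := by simp

theorem DD_rec (K e d : ℕ) (hd : d < 2 ^ e) :
    DD K (2 ^ e + d) = min (2 ^ e + DD K d) (K * (2 ^ e - 1 - d)) := by
  have hpos : (0:ℕ) < 2 ^ e := by positivity
  have hn2 : 2 ^ e + d < 2 ^ (e + 1) := by
    have h2 : (2:ℕ)^(e+1) = 2 * 2^e := by ring
    omega
  have hdisMd : Dis (2 ^ e - 1 - d) d := by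
    have := dis_comp (q := e) hd
    intro b
    rcases this b with hh | hh
    · exact Or.inl hh
    · exact Or.inr hh
  have hMlt : 2 ^ e - 1 - d < 2 ^ e := by omega
  have hdisM : Dis (2 ^ e - 1 - d) (2 ^ e + d) := dis_n_of_dis_d hMlt hdisMd
  apply le_antisymm
  · -- upper bounds
    obtain ⟨m, hmeq, hmdis, hmle⟩ := DD_mem K (2 ^ e + d)
    have hmi_le : ∀ i, m i ≤ 2 ^ e + d := by
      intro i
      refine le_trans ?_ hmle
      exact Finset.single_le_sum (fun j _ => Nat.zero_le _) (Finset.mem_univ i)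
    have hmi_lt : ∀ i, m i < 2 ^ e := by
      intro i
      refine lt_pow_of_bit_zero (by have := hmi_le i; omega) ?_
      rcases hmdis i e with hh | hh
      · exact hh
      · rw [nbit_e d hd] at hh; exact absurd hh one_ne_zero
    have hmdis_d : ∀ i, Dis (m i) d := fun i => dis_d_of_dis_n (hmi_lt i) (hmdis i)
    refine le_min ?_ ?_
    · -- ≤ 2^e + DD K d
      rw [hmeq]
      rcases le_or_gt (∑ i, m i) (2 ^ e) with hS | hS
      · omega
      · set c : ℕ → ℕ := fun b => ∑ i, m i / 2 ^ b % 2 with hc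
        have hSd : ∑ i, m i = ∑ b ∈ Finset.range e, c b * 2 ^ b :=
          masks_to_digits K e m hmi_lt
        obtain ⟨a, ha_le, ha_sum⟩ := coin e c (2 ^ e) dvd_rfl (by omega)
        have hsum_splits : ∑ b ∈ Finset.range e, (c b - a b) * 2 ^ b
            = (∑ i, m i) - 2 ^ e := by
          have hpt : ∀ b ∈ Finset.range e,
              (c b - a b) * 2 ^ b + a b * 2 ^ b = c b * 2 ^ b := by
            intro b _
            have h1 := Nat.sub_mul (c b) (a b) (2 ^ b)
            have h2 : a b * 2 ^ b ≤ c b * 2 ^ b := Nat.mul_le_mul_right _ (ha_le b)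
            omega
          have h2 := Finset.sum_congr rfl hpt
          rw [Finset.sum_add_distrib] at h2
          omega
        have hfree : ∀ b, b < e → c b - a b ≠ 0 → d / 2 ^ b % 2 = 0 := by
          intro b hb hne
          have hcb : c b ≠ 0 := by omega
          rw [hc] at hcb
          obtain ⟨i, hi⟩ := Finset.exists_ne_zero_of_sum_ne_zero hcb
          rcases hmdis_d i b with hh | hh
          · exact absurd hh hi.2
          · exact hh
        have hle' : ∑ b ∈ Finset.range e, (c b - a b) * 2 ^ b ≤ d := by
          rw [hsum_splits]; omega
        have hmem0 := digits_to_masks K e d (fun b => c b - a b)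
          (fun b => le_trans (Nat.sub_le _ _) (bit_sum_le K m b)) hfree hle'
        have hmem : ((∑ i, m i) - 2 ^ e) ∈ DDSet K d := by
          rw [← hsum_splits]
          exact hmem0
        have := le_DD K d hmem
        omega
    · -- ≤ K * (2^e - 1 - d)
      rw [hmeq]
      have hbound : ∀ i, m i ≤ 2 ^ e - 1 - d := by
        intro i
        have := dis_add_lt (q := e + 1) (hmdis i) (by have := hmi_lt i; omega) hn2
        omega
      calc ∑ i, m i ≤ (Finset.univ : Finset (Fin K)).card • (2 ^ e - 1 - d) :=
            Finset.sum_le_card_nsmul _ _ _ (fun i _ => hbound i)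
      _ = K * (2 ^ e - 1 - d) := by simp [mul_comm]
  · -- lower bound : min ∈ DDSet
    rcases le_or_gt (K * (2 ^ e - 1 - d)) (2 ^ e + DD K d) with hcase | hcase
    · rw [min_eq_right hcase]
      refine le_DD K _ ⟨fun _ => 2 ^ e - 1 - d, ?_, fun _ => hdisM, ?_⟩
      · rw [Finset.sum_const]
        simp [mul_comm]
      · rw [Finset.sum_const]
        simp only [Finset.card_univ, Fintype.card_fin, smul_eq_mul]
        have := DD_le K d
        omega
    · rw [min_eq_left (le_of_lt hcase)]
      obtain ⟨md, hmd_eq, hmd_dis, hmd_le⟩ := DD_mem K d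
      have hmdi_lt : ∀ i, md i < 2 ^ e := by
        intro i
        have : md i ≤ d :=
          le_trans (Finset.single_le_sum (fun j _ => Nat.zero_le _) (Finset.mem_univ i)) hmd_le
        omega
      set c : ℕ → ℕ := fun b => ∑ i, md i / 2 ^ b % 2 with hc
      have hSd : ∑ i, md i = ∑ b ∈ Finset.range e, c b * 2 ^ b :=
        masks_to_digits K e md hmdi_lt
      have hcK : ∀ b, c b ≤ K := fun b => bit_sum_le K md b
      have hcfree : ∀ b, c b ≠ 0 → d / 2 ^ b % 2 = 0 := by
        intro b hne
        rw [hc] at hne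
        obtain ⟨i, hi⟩ := Finset.exists_ne_zero_of_sum_ne_zero hne
        rcases hmd_dis i b with hh | hh
        · exact absurd hh hi.2
        · exact hh
      have hdbit : ∀ b, d / 2 ^ b % 2 = 0 ∨ d / 2 ^ b % 2 = 1 := by
        intro b; omega
      have hcle : ∀ b, c b ≤ K * (1 - d / 2 ^ b % 2) := by
        intro b
        rcases hdbit b with hh | hh
        · rw [hh]; simpa using hcK b
        · rw [hh]
          simp only [Nat.sub_self, mul_zero]
          rcases Nat.eq_zero_or_pos (c b) with h0 | h0
          · omega
          · have := hcfree b (by omega); omega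
      have hMsum : ∑ b ∈ Finset.range e, (1 - d / 2 ^ b % 2) * 2 ^ b = 2 ^ e - 1 - d := by
        have hpt : ∀ b ∈ Finset.range e,
            (1 - d / 2 ^ b % 2) * 2 ^ b + (d / 2 ^ b % 2) * 2 ^ b = 2 ^ b := by
          intro b _
          rcases hdbit b with hh | hh <;> rw [hh] <;> ring
        have h2 := Finset.sum_congr rfl hpt
        rw [Finset.sum_add_distrib, sum_range_two_pow] at h2
        have h3 : ∑ b ∈ Finset.range e, (d / 2 ^ b % 2) * 2 ^ b = d := by
          rw [← expand e d, Nat.mod_eq_of_lt hd]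
        omega
      have hheadsum : ∑ b ∈ Finset.range e, (K * (1 - d / 2 ^ b % 2) - c b) * 2 ^ b
          = K * (2 ^ e - 1 - d) - DD K d := by
        have hpt : ∀ b ∈ Finset.range e,
            (K * (1 - d / 2 ^ b % 2) - c b) * 2 ^ b + c b * 2 ^ b
              = K * ((1 - d / 2 ^ b % 2) * 2 ^ b) := by
          intro b _
          have h1 := Nat.sub_mul (K * (1 - d / 2 ^ b % 2)) (c b) (2 ^ b)
          have h2 : c b * 2 ^ b ≤ K * (1 - d / 2 ^ b % 2) * 2 ^ b :=
            Nat.mul_le_mul_right _ (hcle b)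
          have h3 : K * (1 - d / 2 ^ b % 2) * 2 ^ b = K * ((1 - d / 2 ^ b % 2) * 2 ^ b) := by
            ring
          omega
        have h2 := Finset.sum_congr rfl hpt
        rw [Finset.sum_add_distrib, ← Finset.mul_sum, hMsum] at h2
        have h5 : ∑ b ∈ Finset.range e, c b * 2 ^ b = DD K d := by rw [← hSd, ← hmd_eq]
        omega
      have hhead_ge : 2 ^ e ≤ ∑ b ∈ Finset.range e, (K * (1 - d / 2 ^ b % 2) - c b) * 2 ^ b := by
        rw [hheadsum]
        have := DD_le K d
        omega
      obtain ⟨a, ha_le0, ha_sum⟩ := coin e (fun b => K * (1 - d / 2 ^ b % 2) - c b)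
        (2 ^ e) dvd_rfl hhead_ge
      have ha_le : ∀ b, a b ≤ K * (1 - d / 2 ^ b % 2) - c b := ha_le0
      have hsum'' : ∑ b ∈ Finset.range e, (c b + a b) * 2 ^ b = DD K d + 2 ^ e := by
        have hpt : ∀ b ∈ Finset.range e,
            (c b + a b) * 2 ^ b = c b * 2 ^ b + a b * 2 ^ b := fun b _ => by ring
        rw [Finset.sum_congr rfl hpt, Finset.sum_add_distrib, ha_sum, ← hSd, ← hmd_eq]
      have hK'' : ∀ b, c b + a b ≤ K := by
        intro b
        have h1 := ha_le b
        have h2 := hcle b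
        rcases hdbit b with hh | hh
        · rw [hh] at h1 h2
          simp only [Nat.sub_zero, mul_one] at h1 h2
          omega
        · rw [hh] at h1 h2
          simp only [Nat.sub_self, mul_zero] at h1 h2
          omega
      have hfree'' : ∀ b, b < e → c b + a b ≠ 0 → (2 ^ e + d) / 2 ^ b % 2 = 0 := by
        intro b hb hne
        rw [nbit_lt d hb]
        rcases hdbit b with hh | hh
        · exact hh
        · exfalso
          have h1 := ha_le b
          have h2 := hcle b
          rw [hh] at h1 h2
          simp only [Nat.sub_self, mul_zero] at h1 h2
          omega
      have hle'' : ∑ b ∈ Finset.range e, (c b + a b) * 2 ^ b ≤ 2 ^ e + d := by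
        rw [hsum'']
        have := DD_le K d
        omega
      have hmem0 := digits_to_masks K e (2 ^ e + d) (fun b => c b + a b) hK'' hfree'' hle''
      have hmem : (DD K d + 2 ^ e) ∈ DDSet K (2 ^ e + d) := by
        rw [← hsum'']
        exact hmem0
      have := le_DD K _ hmem
      omega

noncomputable section PartA
open MvPolynomial

variable {K : ℕ}

/-- the exponent multi-index of a term in the expansion -/
def nu (a j : Fin K → ℕ) : Fin (K+1) →₀ ℕ :=
  (∑ i : Fin K, Finsupp.single i.castSucc (j i)) +
    Finsupp.single (Fin.last K) (∑ i, (a i - j i))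

lemma nu_castSucc (a j : Fin K → ℕ) (i : Fin K) : nu a j i.castSucc = j i := by
  simp only [nu, Finsupp.add_apply]
  rw [Finsupp.finset_sum_apply]
  rw [Finsupp.single_apply, if_neg (by exact (Fin.castSucc_lt_last i).ne'), add_zero]
  rw [Finset.sum_eq_single i (fun i' _ hne => by
    rw [Finsupp.single_apply, if_neg (by simp [Fin.castSucc_inj]; exact hne)])
    (fun h => absurd (Finset.mem_univ i) h)]
  rw [Finsupp.single_apply, if_pos rfl]

lemma nu_last (a j : Fin K → ℕ) : nu a j (Fin.last K) = ∑ i, (a i - j i) := by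
  simp only [nu, Finsupp.add_apply]
  rw [Finsupp.finset_sum_apply]
  rw [Finsupp.single_apply, if_pos rfl]
  rw [Finset.sum_eq_zero (fun i' _ => by
    rw [Finsupp.single_apply, if_neg (by exact (Fin.castSucc_lt_last i').ne)]), zero_add]

lemma prod_monomial {α : Type*} (s : Finset α) (f : α → (Fin (K+1) →₀ ℕ)) (g : α → ZMod 2) :
    ∏ i ∈ s, (monomial (f i) (g i) : MvPolynomial (Fin (K+1)) (ZMod 2))
      = monomial (∑ i ∈ s, f i) (∏ i ∈ s, g i) := by
  classical
  induction s using Finset.induction with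
  | empty => simp [monomial_zero']
  | insert _ _ h ih =>
    rw [Finset.prod_insert h, Finset.sum_insert h, Finset.prod_insert h, ih, monomial_mul]

lemma factor_expand (u v : Fin (K+1)) (a : ℕ) :
    ((X u + X v : MvPolynomial (Fin (K+1)) (ZMod 2)))^a
      = ∑ b ∈ Finset.range (a+1),
          monomial (Finsupp.single u b + Finsupp.single v (a - b)) ((a.choose b : ZMod 2)) := by
  rw [add_pow]
  refine Finset.sum_congr rfl fun b _ => ?_
  rw [X_pow_eq_monomial, X_pow_eq_monomial, monomial_mul, one_mul]
  rw [show ((a.choose b : ℕ) : MvPolynomial (Fin (K+1)) (ZMod 2)) = C ((a.choose b : ℕ) : ZMod 2)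
    from by push_cast; rfl]
  rw [mul_comm, C_mul_monomial, mul_one]

lemma P_expand (a : Fin K → ℕ) :
    (∏ i : Fin K, (X i.castSucc + X (Fin.last K) : MvPolynomial (Fin (K+1)) (ZMod 2)) ^ a i)
      = ∑ j ∈ Fintype.piFinset (fun i => Finset.range (a i + 1)),
          monomial (nu a j) (∏ i, ((a i).choose (j i) : ZMod 2)) := by
  rw [Finset.prod_congr rfl (fun i _ => factor_expand i.castSucc (Fin.last K) (a i))]
  rw [Finset.prod_univ_sum]
  refine Finset.sum_congr rfl fun j _ => ?_
  rw [prod_monomial]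
  congr 1
  have hs : Finsupp.single (Fin.last K) (∑ i : Fin K, (a i - j i))
      = ∑ i : Fin K, Finsupp.single (Fin.last K) (a i - j i) := by
    simpa only [Finsupp.singleAddHom_apply] using
      map_sum (Finsupp.singleAddHom (Fin.last K)) (fun i => a i - j i) Finset.univ
  rw [nu, hs, Finset.sum_add_distrib]

lemma not_mem_iff (n : ℕ) (p : MvPolynomial (Fin (K+1)) (ZMod 2)) :
    Ideal.Quotient.mk (Ideal.span (Set.range fun i : Fin (K+1) =>
        (X i : MvPolynomial (Fin (K+1)) (ZMod 2)) ^ (n+1))) p ≠ 0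
      ↔ ∃ μ ∈ p.support, ∀ i, μ i ≤ n := by
  rw [Ne, Ideal.Quotient.eq_zero_iff_mem]
  have hr : (Set.range fun i : Fin (K+1) => (X i : MvPolynomial (Fin (K+1)) (ZMod 2)) ^ (n+1))
      = (fun s => monomial s (1 : ZMod 2)) ''
          (Set.range fun i : Fin (K+1) => Finsupp.single i (n+1)) := by
    rw [← Set.range_comp]
    refine congrArg Set.range (funext fun i => ?_)
    exact X_pow_eq_monomial
  rw [hr, mem_ideal_span_monomial_image]
  constructor
  · intro hno
    push_neg at hno
    obtain ⟨μ, hmem, hforall⟩ := hno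
    refine ⟨μ, hmem, fun i => ?_⟩
    have := hforall (Finsupp.single i (n+1)) ⟨i, rfl⟩
    rw [Finsupp.single_le_iff] at this
    omega
  · rintro ⟨μ, hmem, hle⟩ hall
    obtain ⟨si, hsi, hsile⟩ := hall μ hmem
    obtain ⟨i, rfl⟩ := hsi
    rw [Finsupp.single_le_iff] at hsile
    have := hle i
    omega

lemma cast_choose_ne_zero_iff (x y : ℕ) :
    ((x.choose y : ZMod 2) ≠ 0) ↔ (y ≤ x ∧ Dis y (x - y)) := by
  rw [Ne, ZMod.natCast_eq_zero_iff, ← odd_choose_iff, Nat.odd_iff]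
  omega

lemma setS_bound (n s : ℕ)
    (hs : s ∈ {s : ℕ | ∃ a : Fin K → ℕ, s = ∑ i, a i ∧
      Ideal.Quotient.mk (Ideal.span (Set.range fun i : Fin (K+1) =>
        (X i : MvPolynomial (Fin (K+1)) (ZMod 2)) ^ (n+1)))
        (∏ i : Fin K, (X i.castSucc + X (Fin.last K)) ^ a i) ≠ 0}) :
    s ≤ K * n + DD K n := by
  obtain ⟨a, rfl, hne⟩ := hs
  rw [not_mem_iff] at hne
  obtain ⟨μ, hsup, hbd⟩ := hne
  rw [P_expand, MvPolynomial.mem_support_iff, MvPolynomial.coeff_sum] at hsup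
  obtain ⟨j, hjmem, hjne⟩ := Finset.exists_ne_zero_of_sum_ne_zero hsup
  rw [MvPolynomial.coeff_monomial] at hjne
  by_cases heq : nu a j = μ
  case neg => rw [if_neg heq] at hjne; exact absurd rfl hjne
  rw [if_pos heq] at hjne
  have hfac : ∀ i : Fin K, (((a i).choose (j i) : ZMod 2)) ≠ 0 := by
    intro i h0
    exact hjne (Finset.prod_eq_zero (Finset.mem_univ i) h0)
  have hodd : ∀ i, j i ≤ a i ∧ Dis (j i) (a i - j i) :=
    fun i => (cast_choose_ne_zero_iff _ _).mp (hfac i)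
  have hjn : ∀ i, j i ≤ n := by
    intro i
    have := hbd i.castSucc
    rwa [← heq, nu_castSucc] at this
  have hmn : ∑ i, (a i - j i) ≤ n := by
    have := hbd (Fin.last K)
    rwa [← heq, nu_last] at this
  have hkey := fun i => key (j i) (a i - j i) n (hodd i).2 (hjn i)
  choose mt hmt1 hmt2 hmt3 using hkey
  have hsum_mt : (∑ i, mt i) ∈ DDSet K n :=
    ⟨mt, rfl, hmt2, le_trans (Finset.sum_le_sum fun i _ => hmt1 i) hmn⟩
  have h1 : ∑ i, a i ≤ ∑ i, (n + mt i) := by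
    refine Finset.sum_le_sum fun i _ => ?_
    have h3 := hmt3 i
    have h4 := (hodd i).1
    omega
  have h2 : ∑ i : Fin K, (n + mt i) = K * n + ∑ i, mt i := by
    rw [Finset.sum_add_distrib, Finset.sum_const, Finset.card_univ, Fintype.card_fin,
      smul_eq_mul]
  have := le_DD K n hsum_mt
  omega

lemma setS_mem (n : ℕ) :
    (K * n + DD K n) ∈ {s : ℕ | ∃ a : Fin K → ℕ, s = ∑ i, a i ∧
      Ideal.Quotient.mk (Ideal.span (Set.range fun i : Fin (K+1) =>
        (X i : MvPolynomial (Fin (K+1)) (ZMod 2)) ^ (n+1)))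
        (∏ i : Fin K, (X i.castSucc + X (Fin.last K)) ^ a i) ≠ 0} := by
  obtain ⟨md, hmd_eq, hmd_dis, hmd_le⟩ := DD_mem K n
  refine ⟨fun i => n + md i, ?_, ?_⟩
  · rw [Finset.sum_add_distrib, Finset.sum_const, Finset.card_univ, Fintype.card_fin,
      smul_eq_mul, hmd_eq]
  · rw [not_mem_iff, P_expand]
    refine ⟨nu (fun i => n + md i) (fun _ => n), ?_, ?_⟩
    · rw [MvPolynomial.mem_support_iff, MvPolynomial.coeff_sum]
      rw [Finset.sum_eq_single_of_mem (fun _ => n)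
        (Fintype.mem_piFinset.mpr fun i => Finset.mem_range.mpr (by omega))
        (fun j hj hjne => ?_)]
      · rw [MvPolynomial.coeff_monomial, if_pos rfl]
        rw [Finset.prod_ne_zero_iff]
        intro i _
        beta_reduce
        rw [cast_choose_ne_zero_iff]
        refine ⟨by omega, ?_⟩
        have h4 : n + md i - n = md i := by omega
        rw [h4]
        exact dis_comm (hmd_dis i)
      · rw [MvPolynomial.coeff_monomial, if_neg ?_]
        intro hcon
        apply hjne
        funext i
        have := congrArg (fun f : Fin (K+1) →₀ ℕ => f i.castSucc) hcon
        simpa only [nu_castSucc] using this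
    · intro i
      induction i using Fin.lastCases with
      | last =>
        rw [nu_last]
        beta_reduce
        have hpt : ∀ i : Fin K, n + md i - n = md i := fun i => by omega
        rw [Finset.sum_congr rfl (fun i _ => hpt i)]
        exact hmd_le
      | cast i =>
        rw [nu_castSucc]

end PartA


open MvPolynomial in
/-- `zcl k n` is the maximum of `a_1 + ... + a_(k-1)` over tuples of natural numbers
such that the product of the `(x_i + x_k)^(a_i)` is nonzero in
`(Z/2)[x_1, ..., x_k] / (x_1^(n+1), ..., x_k^(n+1))`. (For `k ≥ 1` the ring has
`(k-1)+1 = k` variables, the last one playing the role of `x_k`.) -/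
noncomputable def zcl (k n : ℕ) : ℕ :=
  sSup {s : ℕ | ∃ a : Fin (k - 1) → ℕ, s = ∑ i, a i ∧
    Ideal.Quotient.mk
      (Ideal.span (Set.range fun i : Fin (k - 1 + 1) =>
        (X i : MvPolynomial (Fin (k - 1 + 1)) (ZMod 2)) ^ (n + 1)))
      (∏ i : Fin (k - 1), (X i.castSucc + X (Fin.last (k - 1))) ^ a i) ≠ 0}

/-- `h k n = zcl k n - (k-1)*n`, as an integer. Note `h k 0 = 0`. -/
noncomputable def h (k n : ℕ) : ℤ := (zcl k n : ℤ) - ((k : ℤ) - 1) * n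

theorem zcl_eq (k n : ℕ) : zcl k n = (k-1) * n + DD (k-1) n := by
  apply le_antisymm
  · exact csSup_le ⟨_, setS_mem n⟩ (fun s hs => setS_bound n s hs)
  · exact le_csSup ⟨(k-1) * n + DD (k-1) n, fun s hs => setS_bound n s hs⟩ (setS_mem n)

/-- If `n = 2^e + d` with `0 ≤ d < 2^e` and `k ≥ 2`, then
`h_k(n) = min(h_k(d) + 2^e, (k-1)(2^(e+1) - 1 - n))`. -/
theorem h_recursion (e d k : ℕ) (hd : d < 2 ^ e) (hk : 2 ≤ k) :
    h k (2 ^ e + d) =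
      min (h k d + 2 ^ e) (((k : ℤ) - 1) * (2 ^ (e + 1) - 1 - (2 ^ e + d))) := by
  have hK : ((k:ℤ) - 1) = ((k - 1 : ℕ) : ℤ) := by omega
  have hDD : ∀ n : ℕ, h k n = (DD (k-1) n : ℤ) := by
    intro n
    unfold h
    rw [zcl_eq, hK]
    push_cast
    ring
  rw [hDD, hDD, DD_rec (k-1) e d hd, Nat.cast_min]
  congr 1
  · push_cast
    ring
  · rw [Nat.cast_mul, Nat.cast_sub (by omega : d ≤ 2^e - 1), Nat.cast_sub
      (Nat.one_le_two_pow : 1 ≤ 2^e), ← hK]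
    push_cast
    rw [pow_succ]
    ring
end

section
/- For any finite multiset S of natural numbers, any positive integer m, and any natural number n, φ(Z(m−1) ∪ S, n) ≤ φ(Z(m) ∪ S, n) + 1, where ∪ denotes multiset union. -/
/-- `Zms m` is the set of powers of 2 corresponding to the 0 digits in the binary
expansion of `m` (as a multiset; `Zms 0` is empty). -/
def Zms (m : ℕ) : Multiset ℕ :=
  if m = 0 then 0
  else ((Finset.range (Nat.log 2 m + 1)).filter fun j => ¬m.testBit j).val.map (2 ^ ·)

/-- `phi S n` is the maximal sum of a sub-multiset `T` of `S` subject to `T.sum ≤ n`. -/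
noncomputable def phi (S : Multiset ℕ) (n : ℕ) : ℕ :=
  sSup {t : ℕ | ∃ T ≤ S, T.sum = t ∧ t ≤ n}


lemma phi_bdd (S : Multiset ℕ) (n : ℕ) : BddAbove {t : ℕ | ∃ T ≤ S, T.sum = t ∧ t ≤ n} :=
  ⟨n, fun _ ht => by obtain ⟨T, _, _, h⟩ := ht; exact h⟩

lemma phi_ne (S : Multiset ℕ) (n : ℕ) : {t : ℕ | ∃ T ≤ S, T.sum = t ∧ t ≤ n}.Nonempty :=
  ⟨0, 0, Multiset.zero_le S, rfl, Nat.zero_le n⟩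


lemma phi_spec (S : Multiset ℕ) (n : ℕ) : ∃ T ≤ S, T.sum = phi S n ∧ phi S n ≤ n :=
  Nat.sSup_mem (phi_ne S n) (phi_bdd S n)

lemma le_phi {S T : Multiset ℕ} {n : ℕ} (h : T ≤ S) (h2 : T.sum ≤ n) : T.sum ≤ phi S n :=
  le_csSup (phi_bdd S n) ⟨T, h, rfl, h2⟩

lemma phi_mono {A B : Multiset ℕ} (h : A ≤ B) (n : ℕ) : phi A n ≤ phi B n := by
  obtain ⟨T, hT, hs, hn⟩ := phi_spec A n
  rw [← hs]; exact le_phi (hT.trans h) (hs ▸ hn)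

lemma exists_split {W X Y : Multiset ℕ} (h : W ≤ X + Y) :
    ∃ W₁ W₂, W₁ ≤ X ∧ W₂ ≤ Y ∧ W = W₁ + W₂ := by
  refine ⟨W ∩ X, W - X, Multiset.inter_le_right, ?_, ?_⟩
  · rw [Multiset.sub_le_iff_le_add]
    exact h.trans (by rw [add_comm])
  · ext a
    simp only [Multiset.count_add, Multiset.count_inter, Multiset.count_sub]
    omega

lemma phi_key {A B U : Multiset ℕ} {u : ℕ} (hAB : A + U = B + {u}) (hu : U.sum + 1 = u)
    (S : Multiset ℕ) (n : ℕ) : phi (A + S) n ≤ phi (B + S) n + 1 := by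
  obtain ⟨T, hT, hsum, hle⟩ := phi_spec (A + S) n
  have h1 : T + U ≤ (B + S) + {u} := by
    calc T + U ≤ (A + S) + U := add_le_add hT le_rfl
    _ = (B + {u}) + S := by rw [add_right_comm, hAB]
    _ = (B + S) + {u} := add_right_comm _ _ _
  obtain ⟨W₁, W₂, h₁, h₂, hW⟩ := exists_split h1
  have hsums : T.sum + U.sum = W₁.sum + W₂.sum := by
    rw [← Multiset.sum_add, ← Multiset.sum_add, hW]
  rcases Multiset.le_singleton.mp h₂ with h0 | hu'
  · have : T ≤ B + S := le_trans (le_trans (Multiset.le_add_right T U) hW.le) (by rw [h0, add_zero]; exact h₁)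
    have := le_phi this (hsum ▸ hle)
    omega
  · subst hu'
    rw [Multiset.sum_singleton] at hsums
    have hW₁ : W₁.sum ≤ n := by omega
    have := le_phi h₁ hW₁
    omega

lemma Zms_pow_sub_one (k : ℕ) (hk : 1 ≤ k) : Zms (2 ^ k - 1) = 0 := by
  have h2 : (2:ℕ) ≤ 2 ^ k := by
    calc (2:ℕ) = 2 ^ 1 := by norm_num
    _ ≤ 2 ^ k := Nat.pow_le_pow_right (by norm_num) hk
  have h0 : (2:ℕ) ^ k - 1 ≠ 0 := by omega
  unfold Zms
  rw [if_neg h0]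
  have hlog : Nat.log 2 (2 ^ k - 1) < k := Nat.log_lt_of_lt_pow h0 (by omega)
  have : (Finset.range (Nat.log 2 (2 ^ k - 1) + 1)).filter
      (fun j => ¬(2 ^ k - 1).testBit j) = ∅ := by
    apply Finset.filter_eq_empty_iff.mpr
    intro j hj
    simp only [Finset.mem_range] at hj
    simp [Nat.testBit_two_pow_sub_one, show j < k by omega]
  rw [this]
  rfl

section bits
variable {m k b : ℕ}

lemma bit_lt (hmq : m = 2 ^ (k + 1) * b + 2 ^ k) {j : ℕ} (hj : j < k) :
    m.testBit j = false := by
  obtain ⟨d, rfl⟩ : ∃ d, k = j + d + 1 := ⟨k - j - 1, by omega⟩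
  have hm2 : m = 2 ^ j * (2 * (2 ^ (d + 1) * b + 2 ^ d)) := by rw [hmq]; ring
  rw [Nat.testBit_eq_decide_div_mod_eq, hm2,
    Nat.mul_div_cancel_left _ (pow_pos (by norm_num) j)]
  simp [Nat.mul_mod_right]

lemma bit_eq (hmq : m = 2 ^ (k + 1) * b + 2 ^ k) : m.testBit k = true := by
  have hm2 : m = 2 ^ k * (2 * b + 1) := by rw [hmq]; ring
  rw [Nat.testBit_eq_decide_div_mod_eq, hm2,
    Nat.mul_div_cancel_left _ (pow_pos (by norm_num) k)]
  simp [Nat.mul_add_mod]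

lemma bit'_lt (hmq : m = 2 ^ (k + 1) * b + 2 ^ k) {j : ℕ} (hj : j < k) :
    (m - 1).testBit j = true := by
  obtain ⟨d, rfl⟩ : ∃ d, k = j + d + 1 := ⟨k - j - 1, by omega⟩
  set Y := 2 ^ (d + 1) * b + 2 ^ d with hY
  have hY1 : 1 ≤ Y := by have := Nat.one_le_two_pow (n := d); omega
  have hm2 : m = 2 ^ j * (2 * Y - 1) + 2 ^ j := by
    have h1 : m = 2 ^ j * (2 * Y) := by rw [hmq, hY]; ring
    have h2 : 2 ^ j * (2 * Y) = 2 ^ j * (2 * Y - 1) + 2 ^ j * 1 := by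
      rw [← Nat.mul_add]; congr 1; omega
    omega
  have hm3 : m - 1 = 2 ^ j * (2 * Y - 1) + (2 ^ j - 1) := by
    have := Nat.one_le_two_pow (n := j); omega
  rw [Nat.testBit_eq_decide_div_mod_eq, hm3, Nat.mul_add_div (pow_pos (by norm_num) j),
    Nat.div_eq_of_lt (by have := Nat.one_le_two_pow (n := j); omega)]
  have h5 : (2 * Y - 1) % 2 = 1 := by omega
  simp [h5]

lemma bit'_eq (hmq : m = 2 ^ (k + 1) * b + 2 ^ k) : (m - 1).testBit k = false := by
  have hm2 : m = 2 ^ k * (2 * b) + 2 ^ k := by rw [hmq]; ring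
  have hm3 : m - 1 = 2 ^ k * (2 * b) + (2 ^ k - 1) := by
    have := Nat.one_le_two_pow (n := k); omega
  rw [Nat.testBit_eq_decide_div_mod_eq, hm3, Nat.mul_add_div (pow_pos (by norm_num) k),
    Nat.div_eq_of_lt (by have := Nat.one_le_two_pow (n := k); omega)]
  have : (2 * b + 0) % 2 = 0 := by omega
  simp [this]

lemma bit'_gt (hmq : m = 2 ^ (k + 1) * b + 2 ^ k) {j : ℕ} (hj : k < j) :
    (m - 1).testBit j = m.testBit j := by
  obtain ⟨e, rfl⟩ : ∃ e, j = (k + 1) + e := ⟨j - (k + 1), by omega⟩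
  have hp : 0 < 2 ^ (k + 1) := pow_pos (by norm_num) _
  have hk1 : (2:ℕ) ^ k < 2 ^ (k + 1) := by
    rw [pow_succ]; have := Nat.one_le_two_pow (n := k); omega
  have d1 : m / 2 ^ (k + 1) = b := by
    rw [hmq, Nat.mul_add_div hp, Nat.div_eq_of_lt hk1]
    omega
  have d2 : (m - 1) / 2 ^ (k + 1) = b := by
    have hm3 : m - 1 = 2 ^ (k + 1) * b + (2 ^ k - 1) := by
      have := Nat.one_le_two_pow (n := k); omega
    rw [hm3, Nat.mul_add_div hp, Nat.div_eq_of_lt (by omega)]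
    omega
  have hsplit : ∀ x : ℕ, x / 2 ^ (k + 1 + e) = x / 2 ^ (k + 1) / 2 ^ e := by
    intro x; rw [Nat.div_div_eq_div_mul, ← pow_add]
  rw [Nat.testBit_eq_decide_div_mod_eq, Nat.testBit_eq_decide_div_mod_eq, hsplit, hsplit, d1, d2]

end bits

lemma Zms_cases (m : ℕ) (hm : 1 ≤ m) :
    Zms (m - 1) = 0 ∨
    ∃ k, Zms (m - 1) + ((Finset.range k).val.map (2 ^ ·)) = Zms m + {2 ^ k} := by
  obtain ⟨k, q, hq, hmq0⟩ := Nat.exists_eq_two_pow_mul_odd (Nat.one_le_iff_ne_zero.mp hm)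
  obtain ⟨b, rfl⟩ := hq
  rcases Nat.eq_zero_or_pos b with rfl | hb
  · rcases Nat.eq_zero_or_pos k with rfl | hk
    · left
      have : m = 1 := by simpa using hmq0
      subst this
      simp [Zms]
    · left
      have : m - 1 = 2 ^ k - 1 := by
        rw [hmq0]; ring_nf
      rw [this]
      exact Zms_pow_sub_one k hk
  · right
    refine ⟨k, ?_⟩
    have hmq : m = 2 ^ (k + 1) * b + 2 ^ k := by rw [hmq0]; ring
    have hm0 : m ≠ 0 := by omega
    have hpk : (1:ℕ) ≤ 2 ^ k := Nat.one_le_two_pow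
    have hpk1 : (2:ℕ) ≤ 2 ^ (k + 1) := by
      calc (2:ℕ) = 2 ^ 1 := by norm_num
      _ ≤ 2 ^ (k + 1) := Nat.pow_le_pow_right (by norm_num) (by omega)
    have hbig : 2 ^ (k + 1) ≤ 2 ^ (k + 1) * b := Nat.le_mul_of_pos_right _ hb
    have hm1 : m - 1 ≠ 0 := by omega
    set L := Nat.log 2 m with hL
    have hkL : k ≤ L := by
      rw [hL]
      exact (Nat.le_log_iff_pow_le (by norm_num) hm0).mpr (by omega)
    have h1 : 2 ^ L ≤ m := Nat.pow_log_le_self 2 hm0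
    have h2 : m < 2 ^ (L + 1) := Nat.lt_pow_succ_log_self (by norm_num) m
    have hne : m ≠ 2 ^ L := by
      intro h
      have hpow : (2:ℕ) ^ L = 2 ^ k * 2 ^ (L - k) := by
        rw [← pow_add]; congr 1; omega
      have heq : 2 * b + 1 = 2 ^ (L - k) :=
        Nat.eq_of_mul_eq_mul_left (pow_pos (by norm_num : (0:ℕ) < 2) k)
          (by rw [← hpow, ← h, hmq0])
      rcases Nat.eq_zero_or_pos (L - k) with he | he
      · rw [he] at heq; simp at heq; omega
      · have hdvd : 2 ∣ 2 ^ (L - k) := dvd_pow_self 2 he.ne'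
        omega
    have hlog' : Nat.log 2 (m - 1) = L :=
      Nat.log_eq_of_pow_le_of_lt_pow (by omega) (by omega)
    unfold Zms
    rw [if_neg hm1, if_neg hm0, hlog', ← hL]
    rw [← Multiset.map_singleton (2 ^ ·) k, ← Multiset.map_add, ← Multiset.map_add]
    congr 1
    have nd1 : (((Finset.range (L + 1)).filter fun j => ¬(m - 1).testBit j).val
        + (Finset.range k).val).Nodup := by
      rw [Multiset.nodup_add]
      refine ⟨Finset.nodup _, Finset.nodup _, Multiset.disjoint_left.mpr ?_⟩
      intro a ha hb'
      simp only [Finset.mem_val, Finset.mem_filter, Finset.mem_range] at ha hb'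
      exact ha.2 (by rw [bit'_lt hmq hb'])
    have nd2 : (((Finset.range (L + 1)).filter fun j => ¬m.testBit j).val
        + ({k} : Multiset ℕ)).Nodup := by
      rw [Multiset.nodup_add]
      refine ⟨Finset.nodup _, Multiset.nodup_singleton k, Multiset.disjoint_left.mpr ?_⟩
      intro a ha hb'
      rw [Multiset.mem_singleton] at hb'
      subst hb'
      simp only [Finset.mem_val, Finset.mem_filter, Finset.mem_range] at ha
      exact ha.2 (by rw [bit_eq hmq])
    rw [Multiset.Nodup.ext nd1 nd2]
    intro a
    simp only [Multiset.mem_add, Finset.mem_val, Finset.mem_filter, Finset.mem_range,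
      Multiset.mem_singleton]
    rcases lt_trichotomy a k with h | rfl | h
    · have hb1 : m.testBit a = false := bit_lt hmq h
      have ha1 : a < L + 1 := by omega
      simp [h, hb1, ha1]
    · have hb1 : (m - 1).testBit a = false := bit'_eq hmq
      have ha1 : a < L + 1 := by omega
      simp [hb1, ha1]
    · have hb1 : (m - 1).testBit a = m.testBit a := bit'_gt hmq h
      simp [hb1, show ¬a < k by omega, show a ≠ k by omega]

/-- For any multiset `S`, positive integer `m` and natural number `n`,
`phi(Z(m-1) ∪ S, n) ≤ phi(Z(m) ∪ S, n) + 1`. -/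
theorem phi_pred_le (S : Multiset ℕ) (m : ℕ) (hm : 1 ≤ m) (n : ℕ) :
    phi (Zms (m - 1) + S) n ≤ phi (Zms m + S) n + 1 := by
  rcases Zms_cases m hm with h0 | ⟨k, hk⟩
  · rw [h0, zero_add]
    exact le_trans (phi_mono (Multiset.le_add_left _ _) n) (Nat.le_succ _)
  · refine phi_key hk ?_ S n
    have h1 : ((Finset.range k).val.map (2 ^ ·)).sum = ∑ i ∈ Finset.range k, 2 ^ i := rfl
    have h2 := Nat.geomSum_eq (le_refl 2) k
    simp only [show (2:ℕ) - 1 = 1 from rfl, Nat.div_one] at h2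
    have h3 := Nat.one_le_two_pow (n := k)
    omega
end

section
/- For all n ≥ 0 and k ≥ 2, h̃_k(n) = m_{k−1}(n); that is, the maximum of Σ_{i=1}^{k−1} b_i over tuples of nonnegative integers (b_1, …, b_{k−1}) with Σ b_i ≤ n and every binomial coefficient C(n + b_i, n) odd equals φ(Z(n)^{k−1}, n). -/
/-- `htilde k n` is the maximum of the sum of `b_1, ..., b_(k-1)` over tuples of naturals
with sum at most `n` and every binomial coefficient `C(n + b_i, n)` odd. -/
noncomputable def htilde (k n : ℕ) : ℕ :=
  sSup {s : ℕ | ∃ b : Fin (k - 1) → ℕ, s = ∑ i, b i ∧ s ≤ n ∧ ∀ i, Odd ((n + b i).choose n)}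

lemma sum_testBit_mod (b L : ℕ) :
    ∑ j ∈ Finset.range L, (if b.testBit j then 2 ^ j else 0) = b % 2 ^ L := by
  induction L with
  | zero => simp [Nat.mod_one]
  | succ L ih =>
    rw [Finset.sum_range_succ, ih, Nat.mod_pow_succ]
    have ht : b.testBit L = decide (b / 2 ^ L % 2 = 1) := Nat.testBit_eq_decide_div_mod_eq
    have h2 : b / 2 ^ L % 2 < 2 := Nat.mod_lt _ (by norm_num)
    rcases (by omega : b / 2 ^ L % 2 = 0 ∨ b / 2 ^ L % 2 = 1) with h | h <;> simp [ht, h] <;> ring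

lemma sum_testBit_eq (b L : ℕ) (hb : b < 2 ^ L) :
    ∑ j ∈ (Finset.range L).filter (fun j => b.testBit j), 2 ^ j = b := by
  rw [Finset.sum_filter, sum_testBit_mod, Nat.mod_eq_of_lt hb]

lemma add_eq_lor_of_land (x : ℕ) : ∀ y : ℕ, x &&& y = 0 → x + y = x ||| y := by
  induction x using Nat.strong_induction_on with
  | _ x ih =>
    intro y h
    rcases Nat.eq_zero_or_pos x with rfl | hx
    · simp
    have hd : x / 2 &&& y / 2 = 0 := by rw [← Nat.and_div_two, h]
    have ihx := ih (x / 2) (Nat.div_lt_self hx (by norm_num)) (y / 2) hd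
    have hm : ¬((x &&& y) % 2 = 1) := by rw [h]; simp
    rw [Nat.and_mod_two_eq_one] at hm
    have ho : (x ||| y) % 2 = 1 ↔ x % 2 = 1 ∨ y % 2 = 1 := Nat.or_mod_two_eq_one
    have hod : (x ||| y) / 2 = x / 2 ||| y / 2 := Nat.or_div_two
    have e1 : x = 2 * (x / 2) + x % 2 := (Nat.div_add_mod x 2).symm ▸ by omega
    omega

lemma land_eq_zero_iff {a b : ℕ} : a &&& b = 0 ↔ ∀ j, ¬(a.testBit j ∧ b.testBit j) := by
  constructor
  · intro h j ⟨ha, hb⟩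
    have := Nat.testBit_land a b j
    rw [h, ha, hb] at this
    simp at this
  · intro h
    apply Nat.zero_of_testBit_eq_false
    intro j
    rw [Nat.testBit_land]
    have := h j
    cases hA : a.testBit j <;> cases hB : b.testBit j <;> simp_all

lemma testBit_ge_of_mod {m j : ℕ} (h : m.testBit j) : 2 ^ j ≤ m % 2 ^ (j + 1) := by
  apply Nat.ge_two_pow_of_testBit
  rw [Nat.testBit_mod_two_pow]
  simp [h]

lemma odd_choose_iff_s6 (n b : ℕ) : Odd ((n + b).choose n) ↔ n &&& b = 0 := by
  set B := Nat.log 2 (b + n) + 2 with hB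
  have hp : Fact (Nat.Prime 2) := ⟨Nat.prime_two⟩
  have hlog : Nat.log 2 (b + n) < B := by omega
  have hmult := Nat.Prime.emultiplicity_choose' (p := 2) (n := b) (k := n) Nat.prime_two hlog
  have hpos : 0 < (b + n).choose n := Nat.choose_pos (by omega)
  have hodd : Odd ((n + b).choose n) ↔ ¬ 2 ∣ (b + n).choose n := by
    rw [Nat.add_comm n b, Nat.odd_iff, ← Nat.two_dvd_ne_zero]
  rw [hodd, ← emultiplicity_eq_zero, hmult]
  rw [Nat.cast_eq_zero, Finset.card_eq_zero, Finset.filter_eq_empty_iff]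
  constructor
  · intro h
    rw [land_eq_zero_iff]
    intro j ⟨hn, hb2⟩
    have h2j : 2 ^ j ≤ n := Nat.ge_two_pow_of_testBit hn
    have hp2 : 0 < 2 ^ j := Nat.pow_pos (by norm_num)
    have hbn : 2 ^ j ≤ b + n := by omega
    have hjlog : j ≤ Nat.log 2 (b + n) :=
      (Nat.le_log_iff_pow_le (by norm_num) (by omega)).mpr hbn
    have hjB : j + 1 ∈ Finset.Ico 1 B := by
      rw [Finset.mem_Ico]
      omega
    exact h hjB (by
      have := testBit_ge_of_mod hn
      have := testBit_ge_of_mod hb2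
      have : 2 ^ j + 2 ^ j ≤ n % 2 ^ (j + 1) + b % 2 ^ (j + 1) := by omega
      calc 2 ^ (j + 1) = 2 ^ j + 2 ^ j := by ring
        _ ≤ _ := this)
  · intro h i _
    rw [not_le]
    have h1 : n % 2 ^ i = n &&& (2 ^ i - 1) := (Nat.and_two_pow_sub_one_eq_mod n i).symm
    have h2 : b % 2 ^ i = b &&& (2 ^ i - 1) := (Nat.and_two_pow_sub_one_eq_mod b i).symm
    have hdisj : (n % 2 ^ i) &&& (b % 2 ^ i) = 0 := by
      rw [h1, h2]
      rw [land_eq_zero_iff] at h ⊢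
      intro j ⟨hnj, hbj⟩
      rw [Nat.testBit_land] at hnj hbj
      exact h j ⟨by simpa using (Bool.and_elim_left hnj), by simpa using (Bool.and_elim_left hbj)⟩
    rw [add_eq_lor_of_land _ _ hdisj]
    exact Nat.or_lt_two_pow (Nat.mod_lt _ (by positivity)) (Nat.mod_lt _ (by positivity))

lemma testBit_sum_two_pow (J : Finset ℕ) (i : ℕ) :
    (∑ j ∈ J, 2 ^ j).testBit i ↔ i ∈ J := by
  set b := ∑ j ∈ J, 2 ^ j with hb
  have hlt : b < 2 ^ (b + 1) := lt_of_lt_of_le (Nat.lt_two_pow_self (n := b)) (by gcongr <;> omega)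
  have hJsub : ∀ j ∈ J, j < b + 1 := by
    intro j hj
    have h1 : 2 ^ j ≤ b := Finset.single_le_sum (fun _ _ => Nat.zero_le _) hj
    have := Nat.lt_two_pow_self (n := j)
    omega
  have hfil : ∑ j ∈ (Finset.range (b + 1)).filter (fun j => b.testBit j), 2 ^ j = b :=
    sum_testBit_eq b (b + 1) hlt
  have hJeq : J = (Finset.range (b + 1)).filter (fun j => b.testBit j) :=
    Finset.geomSum_injective (n := 2) le_rfl (by simp only []; rw [hfil, hb])
  constructor
  · intro h
    have hib : i < b + 1 := by
      have := Nat.ge_two_pow_of_testBit h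
      have := Nat.lt_two_pow_self (n := i)
      omega
    rw [hJeq, Finset.mem_filter, Finset.mem_range]
    exact ⟨hib, h⟩
  · intro h
    rw [hJeq, Finset.mem_filter] at h
    exact h.2

lemma mem_Zms {n x : ℕ} (hx : x ∈ Zms n) : ∃ j, x = 2 ^ j ∧ ¬n.testBit j := by
  unfold Zms at hx
  split at hx
  · simp at hx
  · rw [Multiset.mem_map] at hx
    obtain ⟨j, hj, rfl⟩ := hx
    rw [Finset.mem_val, Finset.mem_filter] at hj
    exact ⟨j, rfl, hj.2⟩

lemma Zms_nodup (n : ℕ) : (Zms n).Nodup := by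
  unfold Zms
  split
  · simp
  · exact (Finset.filter _ _).nodup.map (fun a b => by
      intro h
      exact Nat.pow_right_injective (le_refl 2) h)

lemma land_sum_of_le_Zms {n : ℕ} {T : Multiset ℕ} (hT : T ≤ Zms n) : n &&& T.sum = 0 := by
  have hnd : T.Nodup := Multiset.nodup_of_le hT (Zms_nodup n)
  have hform : ∀ x ∈ T, ∃ j, x = 2 ^ j ∧ ¬n.testBit j := fun x hx =>
    mem_Zms (Multiset.mem_of_le hT hx)
  have hTeq : T.map (fun x => 2 ^ Nat.log 2 x) = T := by
    rw [show T.map (fun x => 2 ^ Nat.log 2 x) = T.map id from Multiset.map_congr rfl ?_,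
      Multiset.map_id]
    intro x hx
    obtain ⟨j, rfl, _⟩ := hform x hx
    simp [Nat.log_pow]
  have hJnd : (T.map (Nat.log 2)).Nodup := by
    refine Multiset.Nodup.map_on ?_ hnd
    intro x hx y hy hxy
    obtain ⟨j, rfl, _⟩ := hform x hx
    obtain ⟨j', rfl, _⟩ := hform y hy
    rw [Nat.log_pow (by norm_num), Nat.log_pow (by norm_num)] at hxy
    rw [hxy]
  set Jf : Finset ℕ := ⟨T.map (Nat.log 2), hJnd⟩ with hJf
  have hsum : T.sum = ∑ j ∈ Jf, 2 ^ j := by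
    rw [Finset.sum]
    simp only [hJf]
    rw [Multiset.map_map]
    conv_lhs => rw [← hTeq]
    rfl
  rw [hsum, land_eq_zero_iff]
  intro j ⟨hnj, hsj⟩
  rw [testBit_sum_two_pow] at hsj
  rw [hJf, Finset.mem_mk, Multiset.mem_map] at hsj
  obtain ⟨x, hx, rfl⟩ := hsj
  obtain ⟨j', rfl, hj'⟩ := hform x hx
  rw [Nat.log_pow (by norm_num)] at hnj
  exact hj' hnj

lemma exists_le_Zms {n b : ℕ} (hbn : b ≤ n) (h : n &&& b = 0) :
    ∃ T ≤ Zms n, T.sum = b := by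
  rcases Nat.eq_zero_or_pos n with rfl | hn
  · exact ⟨0, le_refl _, by simpa using (Nat.le_zero.mp hbn).symm⟩
  have hnz : n ≠ 0 := by omega
  have hblt : b < 2 ^ (Nat.log 2 n + 1) :=
    lt_of_le_of_lt hbn (Nat.lt_pow_succ_log_self (by norm_num) n)
  refine ⟨((Finset.range (Nat.log 2 n + 1)).filter fun j => b.testBit j).val.map (2 ^ ·),
    ?_, ?_⟩
  · rw [Zms, if_neg hnz]
    apply Multiset.map_le_map
    rw [Finset.val_le_iff]
    intro j hj
    rw [Finset.mem_filter] at hj ⊢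
    refine ⟨hj.1, ?_⟩
    rw [land_eq_zero_iff] at h
    simp only [Bool.not_eq_true', Bool.not_eq_true] at *
    cases hc : n.testBit j with
    | false => rfl
    | true => exact absurd ⟨hc, hj.2⟩ (h j)
  · exact sum_testBit_eq b (Nat.log 2 n + 1) hblt

lemma multiset_split : ∀ (m : ℕ) (S T : Multiset ℕ), T ≤ m • S →
    ∃ f : Fin m → Multiset ℕ, (∀ i, f i ≤ S) ∧ ∑ i, f i = T := by
  intro m
  induction m with
  | zero =>
    intro S T hT
    rw [zero_nsmul, Multiset.le_zero] at hT
    exact ⟨fun i => i.elim0, fun i => i.elim0, by simp [hT]⟩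
  | succ m ih =>
    intro S T hT
    rw [succ_nsmul] at hT
    have h2 : T - m • S ≤ S := tsub_le_iff_left.mpr hT
    have h1 : T ∩ (m • S) ≤ m • S := Multiset.inter_le_right
    obtain ⟨g, hg, hgsum⟩ := ih (S) (T ∩ (m • S)) h1
    refine ⟨Fin.cons (T - m • S) g, fun i => Fin.cases h2 hg i, ?_⟩
    rw [Fin.sum_cons, hgsum]
    ext a
    rw [Multiset.count_add, Multiset.count_inter, Multiset.count_sub]
    have hle := Multiset.count_le_of_le a hT
    rw [Multiset.count_add] at hle
    omega

lemma msum_sum {m : ℕ} (f : Fin m → Multiset ℕ) : (∑ i, f i).sum = ∑ i, (f i).sum :=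
  map_sum Multiset.sumAddMonoidHom f Finset.univ

/-- The key equation: `htilde_k(n) = m_(k-1)(n) = phi(Z(n)^(k-1), n)`. -/
theorem htilde_eq_phi (n k : ℕ) (hk : 2 ≤ k) :
    htilde k n = phi ((k - 1) • Zms n) n := by
  unfold htilde phi
  congr 1
  ext s
  simp only [Set.mem_setOf_eq]
  constructor
  · rintro ⟨b, hsb, hsn, hodd⟩
    have hbn : ∀ i, b i ≤ n := fun i =>
      le_trans (hsb ▸ Finset.single_le_sum (fun _ _ => Nat.zero_le _) (Finset.mem_univ i)) hsn
    have hb0 : ∀ i, n &&& b i = 0 := fun i => (odd_choose_iff_s6 n (b i)).mp (hodd i)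
    have hT : ∀ i, ∃ T ≤ Zms n, T.sum = b i := fun i => exists_le_Zms (hbn i) (hb0 i)
    choose T hT1 hT2 using hT
    refine ⟨∑ i, T i, ?_, ?_, hsn⟩
    · calc ∑ i, T i ≤ ∑ _i : Fin (k - 1), Zms n := Finset.sum_le_sum fun i _ => hT1 i
        _ = (k - 1) • Zms n := by simp
    · rw [msum_sum, hsb]
      exact Finset.sum_congr rfl fun i _ => hT2 i
  · rintro ⟨T, hT, hTs, hsn⟩
    obtain ⟨f, hf, hfsum⟩ := multiset_split (k - 1) (Zms n) T hT
    refine ⟨fun i => (f i).sum, ?_, hsn, ?_⟩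
    · rw [← hTs, ← hfsum, msum_sum]
    · intro i
      exact (odd_choose_iff_s6 n _).mpr (land_sum_of_le_Zms (hf i))
end
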